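/- Let Ω be a bounded domain in ℝ^d and let w : Ω → ℝ^d be a Lipschitz vector field vanishing on the boundary (i.e., w ∈ W^{1,∞}_0(Ω)^d), and Δt > 0. If Δt·L < 1, where L is the Lipschitz constant of w, then the map X₁(x) = x − Δt·w(x) is a bijection from Ω onto Ω. -/

import Mathlib

open Set

/-- If `w` is Lipschitz with constant `L`, vanishes outside the bounded open set `Ω`,
and `Δt * L < 1`, then `x ↦ x - Δt • w x` maps `Ω` bijectively onto `Ω`. -/
theorem stmt_0 {d : ℕ} (Ω : Set (EuclideanSpace ℝ (Fin d)))
    (hΩopen : IsOpen Ω) (hΩbdd : Bornology.IsBounded Ω)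
    (w : EuclideanSpace ℝ (Fin d) → EuclideanSpace ℝ (Fin d))
    (L : NNReal) (hw : LipschitzWith L w)
    (hw0 : ∀ x ∉ Ω, w x = 0)
    (Δt : ℝ) (hΔt : 0 < Δt) (hcond : Δt * (L : ℝ) < 1) :
    Set.BijOn (fun x => x - Δt • w x) Ω Ω := by
  set f : EuclideanSpace ℝ (Fin d) → EuclideanSpace ℝ (Fin d) :=
    fun x => x - Δt • w x with hf
  -- f is the identity outside Ω
  have hid : ∀ x ∉ Ω, f x = x := by
    intro x hx
    simp [hf, hw0 x hx]
  -- global injectivity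
  have hinj : Function.Injective f := by
    intro x y hxy
    by_contra hne
    have h : x - Δt • w x = y - Δt • w y := hxy
    have hsub : x - y = Δt • (w x - w y) := by
      rw [smul_sub]
      exact sub_eq_sub_iff_sub_eq_sub.mp h
    have h1 : ‖x - y‖ = Δt * ‖w x - w y‖ := by
      rw [hsub, norm_smul, Real.norm_eq_abs, abs_of_pos hΔt]
    have h2 : ‖w x - w y‖ ≤ L * ‖x - y‖ := by
      simpa [dist_eq_norm] using hw.dist_le_mul x y
    have hpos : 0 < ‖x - y‖ := by
      rw [norm_pos_iff]
      exact sub_ne_zero_of_ne hne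
    nlinarith
  -- global surjectivity via the Banach fixed point theorem
  have hsurj : ∀ y, ∃ x, f x = y := by
    intro y
    set K : NNReal := ⟨Δt, hΔt.le⟩ * L with hK
    have hKcoe : (K : ℝ) = Δt * L := by rw [hK]; exact NNReal.coe_mul _ _
    have hKlt : K < 1 := by
      rw [← NNReal.coe_lt_coe, hKcoe]
      simpa using hcond
    have h0 : LipschitzWith K (fun x => Δt • w x) := by
      refine LipschitzWith.of_dist_le_mul fun a b => ?_
      rw [dist_smul₀, Real.norm_eq_abs, abs_of_pos hΔt, hKcoe, mul_assoc]
      exact mul_le_mul_of_nonneg_left (hw.dist_le_mul a b) hΔt.le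
    have h1 : LipschitzWith K (fun x => y + Δt • w x) :=
      LipschitzWith.of_dist_le_mul fun a b => by
        rw [dist_add_left]; exact h0.dist_le_mul a b
    have hg : ContractingWith K (fun x => y + Δt • w x) := ⟨hKlt, h1⟩
    refine ⟨hg.fixedPoint _, ?_⟩
    have hfix := hg.fixedPoint_isFixedPt
    have : y + Δt • w (hg.fixedPoint _) = hg.fixedPoint _ := hfix
    simp only [hf]
    rw [sub_eq_iff_eq_add]
    exact this.symm
  refine ⟨fun x hx => ?_, hinj.injOn, fun y hy => ?_⟩
  · by_contra hfx
    have := hid (f x) hfx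
    have hx' : f (f x) = f x := this
    have := hinj hx'
    rw [this] at hfx
    exact hfx hx
  · obtain ⟨x, hx⟩ := hsurj y
    refine ⟨x, ?_, hx⟩
    by_contra hxΩ
    rw [hid x hxΩ] at hx
    rw [hx] at hxΩ
    exact hxΩ hy
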